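/- In dimension d ≥ 3, for any ε > 0 there exists a bounded open set Ω ⊂ ℝ^d with |Ω| = M (a disjoint union of finitely many balls) such that λ(Ω) = inf{∫_Ω|∇u|² + (1/(km))(∫_{∂Ω}|u|dH^{d-1})² : u ∈ H¹(Ω), ∫_Ω u² = 1} < ε. -/

import Mathlib

open MeasureTheory Metric Set
open scoped NNReal ENNReal Pointwise

def memH1 {d : ℕ} (Ω : Set (EuclideanSpace ℝ (Fin d))) (u : EuclideanSpace ℝ (Fin d) → ℝ) :
    Prop :=
  ContinuousOn u (closure Ω) ∧ DifferentiableOn ℝ u Ω ∧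
  IntegrableOn (fun x => ‖fderiv ℝ u x‖ ^ 2) Ω ∧
  IntegrableOn (fun x => (u x) ^ 2) Ω ∧
  IntegrableOn (fun x => |u x|) (frontier Ω) (μH[(d : ℝ) - 1])

lemma sqrt_diff {a b c : ℝ} (hc : 0 < c) (ha : c ≤ a) (hb : c ≤ b) :
    |Real.sqrt a - Real.sqrt b| ≤ |a - b| / (2 * Real.sqrt c) := by
  have h0a : (0:ℝ) ≤ a := hc.le.trans ha
  have h0b : (0:ℝ) ≤ b := hc.le.trans hb
  have hsum : 2 * Real.sqrt c ≤ Real.sqrt a + Real.sqrt b := by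
    have := Real.sqrt_le_sqrt ha
    have := Real.sqrt_le_sqrt hb
    nlinarith [Real.sqrt_nonneg c]
  have hspos : 0 < 2 * Real.sqrt c := by positivity
  have key : (Real.sqrt a - Real.sqrt b) * (Real.sqrt a + Real.sqrt b) = a - b := by
    have := Real.sq_sqrt h0a
    have := Real.sq_sqrt h0b
    ring_nf
    nlinarith
  rw [le_div_iff₀ hspos]
  calc |Real.sqrt a - Real.sqrt b| * (2 * Real.sqrt c)
      ≤ |Real.sqrt a - Real.sqrt b| * (Real.sqrt a + Real.sqrt b) := by
        apply mul_le_mul_of_nonneg_left _ (abs_nonneg _)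
        linarith [hsum]
    _ = |(Real.sqrt a - Real.sqrt b) * (Real.sqrt a + Real.sqrt b)| := by
        rw [abs_mul, abs_of_nonneg (by positivity : (0:ℝ) ≤ Real.sqrt a + Real.sqrt b)]
    _ = |a - b| := by rw [key]

lemma normsq_eq {d : ℕ} (y : EuclideanSpace ℝ (Fin d)) : ‖y‖ ^ 2 = ∑ j, (y j) ^ 2 := by
  rw [EuclideanSpace.norm_eq, Real.sq_sqrt (by positivity)]
  simp [sq_abs]

set_option maxHeartbeats 2000000 in
lemma sphere_hausdorff_lt_top {d : ℕ} (hd : 0 < d) :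
    μH[(d:ℝ)-1] (sphere (0 : EuclideanSpace ℝ (Fin d)) 1) < ⊤ := by
  have hd1 : (1:ℝ) ≤ d := by exact_mod_cast hd
  have hexp : (0:ℝ) ≤ (d:ℝ) - 1 := by linarith
  have hNe : Nonempty (Fin d) := ⟨⟨0, hd⟩⟩
  set A : Fin d → Set (EuclideanSpace ℝ (Fin d)) :=
    fun i => {y | y i = 0 ∧ ‖y‖ ^ 2 ≤ 1 - 1/d} with hA_def
  set f : Fin d → ℝ → EuclideanSpace ℝ (Fin d) → EuclideanSpace ℝ (Fin d) :=
    fun i σ y => y + (σ * Real.sqrt (1 - ‖y‖ ^ 2)) • EuclideanSpace.single i (1:ℝ) with hf_def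
  -- Lipschitz estimate
  have hlip : ∀ (i : Fin d) (σ : ℝ), |σ| = 1 →
      LipschitzOnWith ((d:ℝ≥0)+1) (f i σ) (A i) := by
    intro i σ hσ
    rw [lipschitzOnWith_iff_dist_le_mul]
    intro y hy z hz
    obtain ⟨-, hy2⟩ := hy
    obtain ⟨-, hz2⟩ := hz
    have hinvd : (0:ℝ) < 1/d := by positivity
    have hya : 1/d ≤ 1 - ‖y‖^2 := by linarith
    have hza : 1/d ≤ 1 - ‖z‖^2 := by linarith
    have hyn : ‖y‖ ≤ 1 := by nlinarith [norm_nonneg y]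
    have hzn : ‖z‖ ≤ 1 := by nlinarith [norm_nonneg z]
    have habs : |(1 - ‖y‖^2) - (1 - ‖z‖^2)| ≤ 2 * ‖y - z‖ := by
      have h1 : |‖y‖ - ‖z‖| ≤ ‖y - z‖ := abs_norm_sub_norm_le y z
      have heq : (1 - ‖y‖^2) - (1 - ‖z‖^2) = -((‖y‖ - ‖z‖) * (‖y‖ + ‖z‖)) := by ring
      have : |(1 - ‖y‖^2) - (1 - ‖z‖^2)| = |‖y‖ - ‖z‖| * (‖y‖ + ‖z‖) := by
        rw [heq, abs_neg, abs_mul, abs_of_nonneg (by positivity : (0:ℝ) ≤ ‖y‖ + ‖z‖)]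
      rw [this]
      calc |‖y‖ - ‖z‖| * (‖y‖ + ‖z‖) ≤ ‖y - z‖ * 2 := by
            apply mul_le_mul h1 (by linarith) (by positivity) (norm_nonneg _)
        _ = 2 * ‖y - z‖ := by ring
    have hsq : |Real.sqrt (1 - ‖y‖^2) - Real.sqrt (1 - ‖z‖^2)| ≤ Real.sqrt d * ‖y - z‖ := by
      have h2 := sqrt_diff hinvd hya hza
      have hsd : Real.sqrt (1/d) = (Real.sqrt d)⁻¹ := by
        rw [one_div, Real.sqrt_inv]
      have hsdpos : 0 < Real.sqrt d := Real.sqrt_pos.2 (by positivity)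
      calc |Real.sqrt (1 - ‖y‖^2) - Real.sqrt (1 - ‖z‖^2)|
          ≤ |(1 - ‖y‖^2) - (1 - ‖z‖^2)| / (2 * Real.sqrt (1/d)) := h2
        _ ≤ (2 * ‖y - z‖) / (2 * Real.sqrt (1/d)) := by
            apply div_le_div_of_nonneg_right ?_ ?_ |>.trans_eq rfl
            · exact habs
            · positivity
        _ = Real.sqrt d * ‖y - z‖ := by
            rw [hsd]
            field_simp
    have hfd : f i σ y - f i σ z = (y - z) +
        ((σ * Real.sqrt (1 - ‖y‖^2)) - (σ * Real.sqrt (1 - ‖z‖^2))) • EuclideanSpace.single i (1:ℝ) := by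
      simp only [hf_def, sub_smul]
      abel
    have hsd_le : Real.sqrt d ≤ d := by
      nlinarith [Real.sq_sqrt (by positivity : (0:ℝ) ≤ (d:ℝ)), Real.sqrt_nonneg (d:ℝ)]
    rw [dist_eq_norm, dist_eq_norm, hfd]
    calc ‖(y - z) + ((σ * Real.sqrt (1 - ‖y‖^2)) - (σ * Real.sqrt (1 - ‖z‖^2))) • EuclideanSpace.single i (1:ℝ)‖
        ≤ ‖y - z‖ + ‖((σ * Real.sqrt (1 - ‖y‖^2)) - (σ * Real.sqrt (1 - ‖z‖^2))) • EuclideanSpace.single i (1:ℝ)‖ :=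
          norm_add_le _ _
      _ = ‖y - z‖ + |σ * Real.sqrt (1 - ‖y‖^2) - σ * Real.sqrt (1 - ‖z‖^2)| := by
          rw [norm_smul, EuclideanSpace.norm_single, Real.norm_eq_abs, norm_one, mul_one]
      _ = ‖y - z‖ + |σ| * |Real.sqrt (1 - ‖y‖^2) - Real.sqrt (1 - ‖z‖^2)| := by
          rw [← abs_mul, mul_sub]
      _ ≤ ‖y - z‖ + Real.sqrt d * ‖y - z‖ := by
          rw [hσ, one_mul]; linarith [hsq]
      _ ≤ ((d:ℝ≥0)+1 : ℝ≥0) * ‖y - z‖ := by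
          push_cast
          nlinarith [norm_nonneg (y - z), hsd_le]
  -- covering of the sphere by graphs
  have hcov : sphere (0 : EuclideanSpace ℝ (Fin d)) 1 ⊆
      ⋃ i : Fin d, (f i 1 '' A i ∪ f i (-1) '' A i) := by
    intro x hx
    have hx1 : ‖x‖ = 1 := by simpa using hx
    have hsum : ∑ j, (x j)^2 = 1 := by rw [← normsq_eq, hx1]; norm_num
    have hconst : ∑ _j : Fin d, 1/(d:ℝ) = 1 := by
      rw [Finset.sum_const, Finset.card_univ, Fintype.card_fin, nsmul_eq_mul]
      field_simp
    have hex : ∃ i, 1/(d:ℝ) ≤ (x i)^2 := by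
      by_contra h
      push_neg at h
      have hlt : ∑ j, (x j)^2 < ∑ _j : Fin d, 1/(d:ℝ) :=
        Finset.sum_lt_sum_of_nonempty Finset.univ_nonempty (fun j _ => h j)
      rw [hsum, hconst] at hlt
      exact lt_irrefl _ hlt
    obtain ⟨i, hi⟩ := hex
    set y : EuclideanSpace ℝ (Fin d) := x - (x i) • EuclideanSpace.single i 1 with hy_def
    have hyi : y i = 0 := by
      simp [hy_def, PiLp.sub_apply, PiLp.smul_apply, EuclideanSpace.single_apply]
    have hyn : ‖y‖^2 = 1 - (x i)^2 := by
      rw [hy_def, norm_sub_sq_real, real_inner_smul_right, EuclideanSpace.inner_single_right,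
        norm_smul, EuclideanSpace.norm_single]
      simp only [conj_trivial, one_mul, Real.norm_eq_abs, norm_one, mul_one, hx1]
      rw [sq_abs]
      ring
    have hmem : y ∈ A i := ⟨hyi, by rw [hyn]; linarith⟩
    have hsqrt : Real.sqrt (1 - ‖y‖^2) = |x i| := by
      rw [hyn]
      rw [show (1:ℝ) - (1 - (x i)^2) = (x i)^2 by ring, Real.sqrt_sq_eq_abs]
    refine mem_iUnion.2 ⟨i, ?_⟩
    rcases le_or_gt 0 (x i) with hpos | hneg
    · refine Or.inl ⟨y, hmem, ?_⟩
      show y + ((1:ℝ) * Real.sqrt (1 - ‖y‖^2)) • EuclideanSpace.single i 1 = x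
      rw [one_mul, hsqrt, abs_of_nonneg hpos, hy_def]
      abel
    · refine Or.inr ⟨y, hmem, ?_⟩
      show y + ((-1:ℝ) * Real.sqrt (1 - ‖y‖^2)) • EuclideanSpace.single i 1 = x
      rw [hsqrt, abs_of_neg hneg, hy_def]
      rw [show (-1:ℝ) * -(x i) = x i by ring]
      abel
  -- finiteness of μH of the slices A i
  have hAfin : ∀ i, μH[(d:ℝ)-1] (A i) < ⊤ := by
    intro i
    set C : Set (Fin d → ℝ) := {y | y i = 0 ∧ ∀ j, |y j| ≤ 1} with hC_def
    have hsub : A i ⊆ ⇑(WithLp.equiv 2 (Fin d → ℝ)) ⁻¹' C := by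
      rintro y ⟨h1, h2⟩
      refine ⟨h1, fun j => ?_⟩
      have hj : (y j)^2 ≤ 1 := by
        have h3 := Finset.single_le_sum (f := fun j => (y j)^2)
          (fun j _ => sq_nonneg _) (Finset.mem_univ j)
        rw [← normsq_eq] at h3
        have h3' : (y j)^2 ≤ ‖y‖^2 := by simpa using h3
        have : (1:ℝ)/d ≥ 0 := by positivity
        linarith
      calc |y j| = Real.sqrt ((y j)^2) := (Real.sqrt_sq_eq_abs _).symm
        _ ≤ Real.sqrt 1 := Real.sqrt_le_sqrt hj
        _ = 1 := Real.sqrt_one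
    -- inclusion of C into a Lipschitz image of a (d-1)-dimensional ball
    set ι : ({j : Fin d // j ≠ i} → ℝ) → (Fin d → ℝ) :=
      fun y j => if h : j = i then 0 else y ⟨j, h⟩ with hι_def
    have hιlip : LipschitzWith 1 ι := by
      apply LipschitzWith.of_dist_le_mul
      intro y z
      rw [NNReal.coe_one, one_mul, dist_pi_le_iff dist_nonneg]
      intro j
      by_cases h : j = i
      · simp only [hι_def, h, dif_pos]
        simpa using dist_nonneg (x := y) (y := z)
      · simpa [hι_def, h] using dist_le_pi_dist y z ⟨j, h⟩
    have hCsub : C ⊆ ι '' (closedBall 0 1) := by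
      rintro y ⟨h1, h2⟩
      refine ⟨fun j => y j.val, ?_, ?_⟩
      · rw [mem_closedBall, dist_zero_right]
        rw [pi_norm_le_iff_of_nonneg zero_le_one]
        intro j
        exact h2 j.val
      · funext j
        by_cases h : j = i
        · simp [hι_def, h, h1.symm, h ▸ h1]
        · simp [hι_def, h]
    have hcard : (Fintype.card {j : Fin d // j ≠ i} : ℝ) = (d:ℝ) - 1 := by
      have : Fintype.card {j : Fin d // j ≠ i} = d - 1 := by
        rw [Fintype.card_subtype_compl, Fintype.card_fin, Fintype.card_subtype_eq]
      rw [this, Nat.cast_sub hd]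
      norm_num
    have hQ : μH[(d:ℝ)-1] (closedBall (0 : {j : Fin d // j ≠ i} → ℝ) 1) < ⊤ := by
      have hpi := hausdorffMeasure_pi_real (ι := {j : Fin d // j ≠ i})
      rw [hcard] at hpi
      rw [hpi]
      exact measure_closedBall_lt_top
    have hCfin : μH[(d:ℝ)-1] C < ⊤ := by
      calc μH[(d:ℝ)-1] C ≤ μH[(d:ℝ)-1] (ι '' (closedBall 0 1)) := measure_mono hCsub
        _ ≤ (1:ℝ≥0) ^ ((d:ℝ)-1) * μH[(d:ℝ)-1] (closedBall 0 1) :=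
            hιlip.hausdorffMeasure_image_le hexp _
        _ < ⊤ := by
            rw [ENNReal.coe_one, ENNReal.one_rpow, one_mul]
            exact hQ
    calc μH[(d:ℝ)-1] (A i) ≤ μH[(d:ℝ)-1] (⇑(WithLp.equiv 2 (Fin d → ℝ)) ⁻¹' C) :=
          measure_mono hsub
      _ ≤ ((Fintype.card (Fin d) : ℝ≥0) ^ ((1:ℝ≥0∞)/2).toReal : ℝ≥0) ^ ((d:ℝ)-1) * μH[(d:ℝ)-1] C :=
          (PiLp.antilipschitzWith_ofLp 2 (fun _ : Fin d => ℝ)).hausdorffMeasure_preimage_le hexp C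
      _ < ⊤ := ENNReal.mul_lt_top (ENNReal.rpow_lt_top_of_nonneg hexp ENNReal.coe_ne_top) hCfin
  -- put everything together
  have hK : ∀ (i : Fin d) (σ : ℝ), |σ| = 1 → μH[(d:ℝ)-1] (f i σ '' A i) < ⊤ := by
    intro i σ hσ
    calc μH[(d:ℝ)-1] (f i σ '' A i)
        ≤ ((d:ℝ≥0)+1 : ℝ≥0) ^ ((d:ℝ)-1) * μH[(d:ℝ)-1] (A i) :=
          (hlip i σ hσ).hausdorffMeasure_image_le hexp
      _ < ⊤ := ENNReal.mul_lt_top (ENNReal.rpow_lt_top_of_nonneg hexp ENNReal.coe_ne_top) (hAfin i)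
  calc μH[(d:ℝ)-1] (sphere (0 : EuclideanSpace ℝ (Fin d)) 1)
      ≤ μH[(d:ℝ)-1] (⋃ i : Fin d, (f i 1 '' A i ∪ f i (-1) '' A i)) := measure_mono hcov
    _ ≤ ∑ i : Fin d, μH[(d:ℝ)-1] (f i 1 '' A i ∪ f i (-1) '' A i) := measure_iUnion_fintype_le _ _
    _ < ⊤ := by
        rw [ENNReal.sum_lt_top]
        intro i _
        calc μH[(d:ℝ)-1] (f i 1 '' A i ∪ f i (-1) '' A i)
            ≤ μH[(d:ℝ)-1] (f i 1 '' A i) + μH[(d:ℝ)-1] (f i (-1) '' A i) := measure_union_le _ _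
          _ < ⊤ := ENNReal.add_lt_top.2 ⟨hK i 1 (by norm_num), hK i (-1) (by norm_num)⟩

lemma frontier_union_balls {X : Type*} [NormedAddCommGroup X] [NormedSpace ℝ X]
    {N : ℕ} (c : Fin N → X) {r : ℝ} (hr : 0 < r)
    (hsep : ∀ i j, i ≠ j → 3*r ≤ dist (c i) (c j)) :
    frontier (⋃ i, ball (c i) r) = ⋃ i, sphere (c i) r := by
  have hclosure : closure (⋃ i, ball (c i) r) = ⋃ i, closedBall (c i) r := by
    apply Subset.antisymm
    · exact closure_minimal (iUnion_mono fun i => ball_subset_closedBall)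
        (isClosed_iUnion_of_finite fun i => isClosed_closedBall)
    · refine iUnion_subset fun i => ?_
      rw [← closure_ball (c i) hr.ne']
      exact closure_mono (subset_iUnion (fun i => ball (c i) r) i)
  rw [frontier, hclosure, (isOpen_iUnion fun i => isOpen_ball).interior_eq]
  ext x
  simp only [mem_diff, mem_iUnion, not_exists]
  constructor
  · rintro ⟨⟨i, hi⟩, h2⟩
    refine ⟨i, ?_⟩
    have hnb : ¬ dist x (c i) < r := by simpa [mem_ball] using h2 i
    rw [mem_sphere]
    exact le_antisymm hi (not_lt.1 hnb)
  · rintro ⟨i, hi⟩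
    rw [mem_sphere] at hi
    refine ⟨⟨i, by rw [mem_closedBall, hi]⟩, fun j hj => ?_⟩
    rw [mem_ball] at hj
    by_cases h : j = i
    · subst h; rw [hi] at hj; exact lt_irrefl _ hj
    · have h3 := hsep j i h
      linarith [dist_triangle (c j) x (c i), dist_comm (c j) x]

lemma sphere_scale {d : ℕ} (hd : 0 < d) (p : EuclideanSpace ℝ (Fin d)) {r : ℝ} (hr : 0 < r) :
    μH[(d:ℝ)-1] (sphere p r) =
      (‖r‖₊ ^ ((d:ℝ)-1) : ℝ≥0) • μH[(d:ℝ)-1] (sphere (0 : EuclideanSpace ℝ (Fin d)) 1) := by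
  have hexp : (0:ℝ) ≤ (d:ℝ) - 1 := by
    have : (1:ℝ) ≤ d := by exact_mod_cast hd
    linarith
  haveI hnt : Nontrivial (EuclideanSpace ℝ (Fin d)) := by
    refine ⟨EuclideanSpace.single ⟨0, hd⟩ 1, 0, fun h => ?_⟩
    have := congrArg (fun v => v ⟨0, hd⟩) h
    simp [EuclideanSpace.single_apply] at this
  have htr : sphere p r = (fun v => v + p) '' (sphere (0 : EuclideanSpace ℝ (Fin d)) r) := by
    ext x
    simp only [mem_image, mem_sphere]
    constructor
    · intro hx
      exact ⟨x - p, by rw [dist_zero_right, ← dist_eq_norm]; exact hx, by abel⟩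
    · rintro ⟨v, hv, rfl⟩
      rw [dist_zero_right] at hv
      rw [dist_eq_norm, add_sub_cancel_right, hv]
  have hsm : sphere (0 : EuclideanSpace ℝ (Fin d)) r =
      r • sphere (0 : EuclideanSpace ℝ (Fin d)) 1 := by
    rw [smul_sphere r (0 : EuclideanSpace ℝ (Fin d)) zero_le_one, smul_zero,
      Real.norm_eq_abs, abs_of_pos hr, mul_one]
  rw [htr, show (fun v => v + p) = ⇑(IsometryEquiv.vaddConst p) from rfl,
    IsometryEquiv.hausdorffMeasure_image, hsm,
    Measure.hausdorffMeasure_smul₀ hexp hr.ne' _]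

set_option maxHeartbeats 2000000 in
/-- In dimension `d ≥ 3`, for every `ε > 0` there is a domain of prescribed volume `M`,
a disjoint union of finitely many balls, whose auxiliary eigenvalue is below `ε`. -/
theorem stmt17 {d : ℕ} (hd : 3 ≤ d) (M k m : ℝ) (hM : 0 < M) (hk : 0 < k) (hm : 0 < m) :
    ∀ ε : ℝ, 0 < ε → ∃ Ω : Set (EuclideanSpace ℝ (Fin d)),
      IsOpen Ω ∧ Bornology.IsBounded Ω ∧ volume Ω = ENNReal.ofReal M ∧
      (∃ (N : ℕ) (c : Fin N → EuclideanSpace ℝ (Fin d)) (r : ℝ), 0 < r ∧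
        Ω = ⋃ i, ball (c i) r ∧
        Pairwise (Function.onFun Disjoint fun i => ball (c i) r)) ∧
      sInf {E : ℝ | ∃ u, memH1 Ω u ∧ (∫ x in Ω, (u x) ^ 2) = 1 ∧
          E = (∫ x in Ω, ‖fderiv ℝ u x‖ ^ 2) +
            (1/(k*m)) * (∫ x in frontier Ω, |u x| ∂(μH[(d : ℝ) - 1])) ^ 2} < ε := by
  intro ε hε
  have hdpos : 0 < d := by omega
  haveI : Nontrivial (EuclideanSpace ℝ (Fin d)) :=
    ⟨⟨EuclideanSpace.single ⟨0, hdpos⟩ 1, 0, fun h => by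
      simpa [EuclideanSpace.single_apply] using congrArg (fun v => v ⟨0, hdpos⟩) h⟩⟩
  set S : ℝ≥0∞ := μH[(d:ℝ)-1] (sphere (0 : EuclideanSpace ℝ (Fin d)) 1) with hS_def
  have hS_fin : S < ⊤ := sphere_hausdorff_lt_top hdpos
  set S₁ : ℝ := S.toReal with hS₁_def
  have hS₁0 : 0 ≤ S₁ := ENNReal.toReal_nonneg
  have hV_fin : volume (ball (0 : EuclideanSpace ℝ (Fin d)) 1) < ⊤ := measure_ball_lt_top
  have hV_pos : 0 < volume (ball (0 : EuclideanSpace ℝ (Fin d)) 1) := measure_ball_pos _ _ one_pos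
  set ω : ℝ := (volume (ball (0 : EuclideanSpace ℝ (Fin d)) 1)).toReal with hω_def
  have hωpos : 0 < ω := ENNReal.toReal_pos hV_pos.ne' hV_fin.ne
  set C : ℝ := 1/(k*m) * S₁^2 / ω with hC_def
  have hC0 : 0 ≤ C := by positivity
  set r₀ : ℝ := min 1 (ε / (2*(C+1))) with hr₀_def
  have hr₀pos : 0 < r₀ := lt_min one_pos (by positivity)
  have hr₀le1 : r₀ ≤ 1 := min_le_left _ _
  have hCr₀ : C * r₀ < ε := by
    have h1 : r₀ ≤ ε / (2*(C+1)) := min_le_right _ _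
    have h2 : C * r₀ ≤ C * (ε / (2*(C+1))) := mul_le_mul_of_nonneg_left h1 hC0
    have h3 : C * (ε / (2*(C+1))) < ε := by
      rw [show C * (ε / (2*(C+1))) = (C*ε)/(2*(C+1)) by ring, div_lt_iff₀ (by positivity)]
      nlinarith
    linarith
  obtain ⟨N, hN⟩ := exists_nat_gt (M / (ω * r₀^d))
  have hfrac_pos : 0 < M / (ω * r₀^d) := by positivity
  have hNR : (0:ℝ) < N := hfrac_pos.trans hN
  have hNpos : 0 < N := by exact_mod_cast hNR
  set r : ℝ := (M / (N * ω)) ^ ((1:ℝ)/d) with hr_def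
  have hMN : 0 < M / (N * ω) := by positivity
  have hrpos : 0 < r := Real.rpow_pos_of_pos hMN _
  have hrd : r ^ d = M / (N * ω) := by
    rw [hr_def, ← Real.rpow_natCast ((M / (N*ω)) ^ ((1:ℝ)/d)) d, ← Real.rpow_mul hMN.le,
      one_div, inv_mul_cancel₀ (by exact_mod_cast hdpos.ne' : (d:ℝ) ≠ 0), Real.rpow_one]
  have hrr₀ : r < r₀ := by
    have h1 : r ^ d < r₀ ^ d := by
      rw [hrd, div_lt_iff₀ (by positivity)]
      rw [div_lt_iff₀ (by positivity)] at hN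
      nlinarith
    exact lt_of_pow_lt_pow_left₀ d hr₀pos.le h1
  have hrle1 : r ≤ 1 := hrr₀.le.trans hr₀le1
  -- centers
  set e₁ : EuclideanSpace ℝ (Fin d) := EuclideanSpace.single ⟨0, hdpos⟩ 1 with he₁
  have he₁norm : ‖e₁‖ = 1 := by rw [he₁, EuclideanSpace.norm_single, norm_one]
  set cts : Fin N → EuclideanSpace ℝ (Fin d) := fun i => ((3*r) * ((i : ℕ) : ℝ)) • e₁ with hcts
  have hsep : ∀ i j : Fin N, i ≠ j → 3*r ≤ dist (cts i) (cts j) := by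
    intro i j hij
    have hvne : ((i:ℕ):ℤ) ≠ ((j:ℕ):ℤ) := by
      exact_mod_cast fun h => hij (Fin.ext h)
    have h1 : (1:ℝ) ≤ |((i:ℕ):ℝ) - ((j:ℕ):ℝ)| := by
      exact_mod_cast Int.one_le_abs (sub_ne_zero.2 hvne)
    have h2 : dist (cts i) (cts j) = 3*r*|((i:ℕ):ℝ) - ((j:ℕ):ℝ)| := by
      rw [hcts]
      simp only
      rw [dist_eq_norm, ← sub_smul, norm_smul, Real.norm_eq_abs, he₁norm, mul_one,
        show (3*r*((i:ℕ):ℝ) - 3*r*((j:ℕ):ℝ)) = (3*r)*(((i:ℕ):ℝ) - ((j:ℕ):ℝ)) by ring,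
        abs_mul, abs_of_pos (by linarith : (0:ℝ) < 3*r)]
    rw [h2]
    nlinarith
  set Ω : Set (EuclideanSpace ℝ (Fin d)) := ⋃ i, ball (cts i) r with hΩ_def
  have hΩopen : IsOpen Ω := isOpen_iUnion fun i => isOpen_ball
  have hΩmeas : MeasurableSet Ω := hΩopen.measurableSet
  have hdisj : Pairwise (Function.onFun Disjoint fun i => ball (cts i) r) := by
    intro i j hij
    exact ball_disjoint_ball (by linarith [hsep i j hij] : r + r ≤ dist (cts i) (cts j))
  have hbb : Bornology.IsBounded Ω := by
    apply (Metric.isBounded_closedBall (x := (0:EuclideanSpace ℝ (Fin d))) (r := 3*r*N + r)).subset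
    rw [hΩ_def]
    refine iUnion_subset fun i x hx => ?_
    rw [mem_closedBall]
    have h1 : dist x (cts i) < r := mem_ball.1 hx
    have hc0 : (0:ℝ) ≤ ((i:ℕ):ℝ) := Nat.cast_nonneg _
    have h2 : ‖cts i‖ ≤ 3*r*N := by
      rw [hcts]
      simp only
      rw [norm_smul, Real.norm_eq_abs, he₁norm, mul_one,
        abs_of_nonneg (by nlinarith : (0:ℝ) ≤ 3*r*((i:ℕ):ℝ))]
      have h3 : ((i:ℕ):ℝ) ≤ N := by
        have := i.2
        exact_mod_cast this.le
      nlinarith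
    calc dist x 0 ≤ dist x (cts i) + dist (cts i) 0 := dist_triangle _ _ _
      _ = dist x (cts i) + ‖cts i‖ := by rw [dist_zero_right]
      _ ≤ 3*r*N + r := by linarith
  -- volume
  have hballvol : ∀ p : EuclideanSpace ℝ (Fin d), volume (ball p r) =
      ENNReal.ofReal (r^d) * volume (ball (0:EuclideanSpace ℝ (Fin d)) 1) := by
    intro p
    rw [Measure.addHaar_ball volume p hrpos.le, finrank_euclideanSpace_fin]
  have hΩvol : volume Ω = ENNReal.ofReal M := by
    rw [hΩ_def, measure_iUnion hdisj (fun i => measurableSet_ball), tsum_fintype]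
    simp only [hballvol]
    rw [Finset.sum_const, Finset.card_univ, Fintype.card_fin, nsmul_eq_mul]
    rw [show volume (ball (0 : EuclideanSpace ℝ (Fin d)) 1) = ENNReal.ofReal ω from
      (ENNReal.ofReal_toReal hV_fin.ne).symm]
    rw [← ENNReal.ofReal_mul (pow_nonneg hrpos.le d), ← ENNReal.ofReal_natCast N,
      ← ENNReal.ofReal_mul (Nat.cast_nonneg N)]
    congr 1
    rw [hrd]
    field_simp
  -- the central ball
  have hi₀ : cts ⟨0, hNpos⟩ = 0 := by
    rw [hcts]
    simp
  set v : ℝ := (volume (ball (0:EuclideanSpace ℝ (Fin d)) r)).toReal with hv_def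
  have hv_eq : v = r^d * ω := by
    rw [hv_def, hballvol, ENNReal.toReal_mul, ENNReal.toReal_ofReal (pow_nonneg hrpos.le d), hω_def]
  have hvpos : 0 < v := by rw [hv_eq]; positivity
  set cc : ℝ := (Real.sqrt v)⁻¹ with hcc
  have hccpos : 0 < cc := by rw [hcc]; positivity
  have hccsq : cc^2 * v = 1 := by
    rw [hcc, inv_pow, Real.sq_sqrt hvpos.le]
    field_simp
  -- test function
  set u : EuclideanSpace ℝ (Fin d) → ℝ := fun x => cc * min 1 (max 0 (2 - ‖x‖/r)) with hu
  have hu_cont : Continuous u := by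
    apply continuous_const.mul
    exact continuous_const.min (continuous_const.max
      (continuous_const.sub (continuous_norm.div_const r)))
  have hu_ball : ∀ x : EuclideanSpace ℝ (Fin d), ‖x‖ ≤ r → u x = cc := by
    intro x hx
    have h1 : ‖x‖ / r ≤ 1 := by rw [div_le_one hrpos]; exact hx
    simp only [hu]
    rw [max_eq_right (by linarith), min_eq_left (by linarith), mul_one]
  have hu_far : ∀ x : EuclideanSpace ℝ (Fin d), 2*r ≤ ‖x‖ → u x = 0 := by
    intro x hx
    have h1 : (2:ℝ) ≤ ‖x‖ / r := by rw [le_div_iff₀ hrpos]; linarith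
    simp only [hu]
    rw [max_eq_left (by linarith), min_eq_right zero_le_one, mul_zero]
  have hψ : ∀ x : EuclideanSpace ℝ (Fin d), 0 ≤ min 1 (max 0 (2 - ‖x‖/r)) ∧
      min 1 (max 0 (2 - ‖x‖/r)) ≤ 1 :=
    fun x => ⟨le_min zero_le_one (le_max_left _ _), min_le_left _ _⟩
  have hu_abs : ∀ x, |u x| ≤ cc := by
    intro x
    simp only [hu]
    rw [abs_mul, abs_of_pos hccpos, abs_of_nonneg (hψ x).1]
    nlinarith [(hψ x).2]
  have hnorm_ge : ∀ (i : Fin N), i ≠ ⟨0, hNpos⟩ → ∀ x, dist x (cts i) ≤ r → 2*r ≤ ‖x‖ := by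
    intro i hi x hx
    have h1 := hsep i ⟨0,hNpos⟩ hi
    rw [hi₀] at h1
    have h2 : dist (cts i) (0:EuclideanSpace ℝ (Fin d)) ≤ dist (cts i) x + dist x 0 :=
      dist_triangle _ _ _
    rw [dist_zero_right] at h1
    rw [dist_zero_right, dist_zero_right, dist_comm (cts i) x] at h2
    linarith
  -- derivative vanishes on Ω
  have hfd : ∀ x ∈ Ω, fderiv ℝ u x = 0 ∧ DifferentiableAt ℝ u x := by
    intro x hx
    obtain ⟨i, hi⟩ := mem_iUnion.1 hx
    by_cases hio : i = ⟨0, hNpos⟩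
    · subst hio
      rw [hi₀] at hi
      have hev : u =ᶠ[nhds x] (fun _ => cc) := by
        filter_upwards [isOpen_ball.mem_nhds hi] with y hy
        rw [mem_ball, dist_zero_right] at hy
        exact hu_ball y hy.le
      exact ⟨by rw [hev.fderiv_eq]; exact fderiv_const_apply cc,
        (differentiableAt_const cc).congr_of_eventuallyEq hev⟩
    · have hev : u =ᶠ[nhds x] (fun _ => (0:ℝ)) := by
        filter_upwards [isOpen_ball.mem_nhds hi] with y hy
        exact hu_far y (hnorm_ge i hio y (mem_ball.1 hy).le)
      exact ⟨by rw [hev.fderiv_eq]; exact fderiv_const_apply (0:ℝ),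
        (differentiableAt_const (0:ℝ)).congr_of_eventuallyEq hev⟩
  -- frontier
  have hfr : frontier Ω = ⋃ i, sphere (cts i) r := frontier_union_balls cts hrpos hsep
  have hfrmeas : MeasurableSet (frontier Ω) := isClosed_frontier.measurableSet
  have hsph_eq : ∀ p : EuclideanSpace ℝ (Fin d),
      μH[(d:ℝ)-1] (sphere p r) = (‖r‖₊ ^ ((d:ℝ)-1) : ℝ≥0) • S :=
    fun p => sphere_scale hdpos p hrpos
  have hsph_fin : ∀ p : EuclideanSpace ℝ (Fin d), μH[(d:ℝ)-1] (sphere p r) < ⊤ := by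
    intro p
    rw [hsph_eq p, ENNReal.smul_def, smul_eq_mul]
    exact ENNReal.mul_lt_top ENNReal.coe_lt_top hS_fin
  have hT : (μH[(d:ℝ)-1] (sphere (0:EuclideanSpace ℝ (Fin d)) r)).toReal =
      r ^ ((d:ℝ)-1) * S₁ := by
    rw [hsph_eq 0, ENNReal.smul_def, smul_eq_mul, ENNReal.toReal_mul, ENNReal.coe_toReal,
      NNReal.coe_rpow, coe_nnnorm, Real.norm_eq_abs, abs_of_pos hrpos, hS₁_def]
  have hEqF : EqOn (fun x => |u x|)
      ((sphere (0:EuclideanSpace ℝ (Fin d)) r).indicator fun _ => cc) (frontier Ω) := by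
    intro x hx
    rw [hfr] at hx
    obtain ⟨i, hi⟩ := mem_iUnion.1 hx
    by_cases hio : i = ⟨0, hNpos⟩
    · subst hio
      rw [hi₀] at hi
      have hxn : ‖x‖ = r := by rw [← dist_zero_right]; exact mem_sphere.1 hi
      rw [indicator_of_mem hi]
      simp only
      rw [hu_ball x hxn.le, abs_of_pos hccpos]
    · have h2r : 2*r ≤ ‖x‖ := hnorm_ge i hio x (mem_sphere.1 hi).le
      have hxs : x ∉ sphere (0:EuclideanSpace ℝ (Fin d)) r := by
        intro hmem
        have : ‖x‖ = r := by rw [← dist_zero_right]; exact mem_sphere.1 hmem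
        linarith
      rw [indicator_of_notMem hxs]
      simp only
      rw [hu_far x h2r, abs_zero]
  have hfr_int : IntegrableOn (fun x => |u x|) (frontier Ω) (μH[(d:ℝ)-1]) := by
    have hind : IntegrableOn ((sphere (0:EuclideanSpace ℝ (Fin d)) r).indicator fun _ => cc)
        (frontier Ω) (μH[(d:ℝ)-1]) := by
      rw [IntegrableOn, integrable_indicator_iff isClosed_sphere.measurableSet]
      refine integrableOn_const (LT.lt.ne ?_)
      calc (μH[(d:ℝ)-1].restrict (frontier Ω)) (sphere (0:EuclideanSpace ℝ (Fin d)) r)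
          ≤ μH[(d:ℝ)-1] (sphere (0:EuclideanSpace ℝ (Fin d)) r) := Measure.restrict_apply_le _ _
        _ < ⊤ := hsph_fin _
    exact hind.congr_fun hEqF.symm hfrmeas
  have hsub0 : sphere (0:EuclideanSpace ℝ (Fin d)) r ⊆ frontier Ω := by
    rw [hfr]
    intro x hx
    exact mem_iUnion.2 ⟨⟨0,hNpos⟩, by rw [hi₀]; exact hx⟩
  have hIfr : ∫ x in frontier Ω, |u x| ∂(μH[(d:ℝ)-1]) = cc * (r ^ ((d:ℝ)-1) * S₁) := by
    rw [setIntegral_congr_fun hfrmeas hEqF, setIntegral_indicator isClosed_sphere.measurableSet,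
      inter_eq_self_of_subset_right hsub0, setIntegral_const, smul_eq_mul, measureReal_def, hT, mul_comm]
  have hballsub : ball (0:EuclideanSpace ℝ (Fin d)) r ⊆ Ω := by
    rw [hΩ_def]
    intro x hx
    exact mem_iUnion.2 ⟨⟨0,hNpos⟩, by rw [hi₀]; exact hx⟩
  have hEqΩ : EqOn (fun x => (u x)^2)
      ((ball (0:EuclideanSpace ℝ (Fin d)) r).indicator fun _ => cc^2) Ω := by
    intro x hx
    obtain ⟨i, hi⟩ := mem_iUnion.1 hx
    by_cases hio : i = ⟨0,hNpos⟩
    · subst hio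
      rw [hi₀] at hi
      rw [indicator_of_mem hi]
      simp only
      have hxn : ‖x‖ < r := by rw [← dist_zero_right]; exact mem_ball.1 hi
      rw [hu_ball x hxn.le]
    · have h2r : 2*r ≤ ‖x‖ := hnorm_ge i hio x (mem_ball.1 hi).le
      have hxnb : x ∉ ball (0:EuclideanSpace ℝ (Fin d)) r := by
        rw [mem_ball, dist_zero_right]
        intro hcon
        linarith
      rw [indicator_of_notMem hxnb]
      simp only
      rw [hu_far x h2r]
      ring
  have hI2 : (∫ x in Ω, (u x)^2) = 1 := by
    rw [setIntegral_congr_fun hΩmeas hEqΩ, setIntegral_indicator measurableSet_ball,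
      inter_eq_self_of_subset_right hballsub, setIntegral_const, smul_eq_mul, measureReal_def, ← hv_def, mul_comm]
    exact hccsq
  have hI1 : (∫ x in Ω, ‖fderiv ℝ u x‖^2) = 0 := by
    rw [setIntegral_congr_fun (g := fun _ => (0:ℝ)) hΩmeas
      (fun x hx => by rw [(hfd x hx).1]; simp), integral_zero]
  -- memH1
  have hmem : memH1 Ω u := by
    refine ⟨hu_cont.continuousOn, fun x hx => ((hfd x hx).2).differentiableWithinAt, ?_, ?_, hfr_int⟩
    · exact (integrableOn_zero (μ := volume)).congr_fun
        (fun x hx => by rw [(hfd x hx).1]; simp) hΩmeas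
    · exact Measure.integrableOn_of_bounded (by rw [hΩvol]; exact ENNReal.ofReal_ne_top)
        ((hu_cont.pow 2).aestronglyMeasurable)
        (MeasureTheory.ae_of_all _ fun a => by
          rw [Real.norm_eq_abs, abs_pow]
          exact pow_le_pow_left₀ (abs_nonneg _) (hu_abs a) 2)
  -- the candidate energy is in the set
  have hmemset : ((∫ x in Ω, ‖fderiv ℝ u x‖ ^ 2) +
      1/(k*m) * (∫ x in frontier Ω, |u x| ∂(μH[(d : ℝ) - 1])) ^ 2) ∈
      {E : ℝ | ∃ u, memH1 Ω u ∧ (∫ x in Ω, (u x) ^ 2) = 1 ∧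
          E = (∫ x in Ω, ‖fderiv ℝ u x‖ ^ 2) +
            (1/(k*m)) * (∫ x in frontier Ω, |u x| ∂(μH[(d : ℝ) - 1])) ^ 2} :=
    ⟨u, hmem, hI2, rfl⟩
  have hbdd : BddBelow {E : ℝ | ∃ u, memH1 Ω u ∧ (∫ x in Ω, (u x) ^ 2) = 1 ∧
      E = (∫ x in Ω, ‖fderiv ℝ u x‖ ^ 2) +
        (1/(k*m)) * (∫ x in frontier Ω, |u x| ∂(μH[(d : ℝ) - 1])) ^ 2} := by
    refine ⟨0, fun E hE => ?_⟩
    obtain ⟨w, hw, hw1, rfl⟩ := hE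
    have h1 : 0 ≤ ∫ x in Ω, ‖fderiv ℝ w x‖^2 := integral_nonneg (fun x => by positivity)
    have h2 : 0 ≤ 1/(k*m) * (∫ x in frontier Ω, |w x| ∂(μH[(d : ℝ) - 1])) ^ 2 :=
      mul_nonneg (one_div_nonneg.2 (mul_pos hk hm).le) (sq_nonneg _)
    linarith
  refine ⟨Ω, hΩopen, hbb, hΩvol, ⟨N, cts, r, hrpos, hΩ_def, hdisj⟩, ?_⟩
  refine lt_of_le_of_lt (csInf_le hbdd hmemset) ?_
  rw [hI1, hIfr]
  -- final arithmetic
  have hcc2 : cc^2 = v⁻¹ := eq_inv_of_mul_eq_one_left hccsq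
  have hA : (r ^ ((d:ℝ)-1))^2 = r ^ ((d:ℝ)-2) * r^d := by
    rw [← Real.rpow_natCast r d, ← Real.rpow_add hrpos,
      ← Real.rpow_natCast (r ^ ((d:ℝ)-1)) 2, ← Real.rpow_mul hrpos.le]
    congr 1
    push_cast
    ring
  have hrdne : r^d ≠ 0 := by positivity
  have hval : (0:ℝ) + 1/(k*m) * (cc * (r ^ ((d:ℝ)-1) * S₁))^2 = C * r^((d:ℝ)-2) := by
    have step1 : (0:ℝ) + 1/(k*m) * (cc * (r ^ ((d:ℝ)-1) * S₁))^2
        = 1/(k*m) * (cc^2 * ((r ^ ((d:ℝ)-1))^2 * S₁^2)) := by ring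
    rw [step1, hcc2, hv_eq, hA, hC_def]
    field_simp
  rw [hval]
  have hr_exp : r ^ ((d:ℝ)-2) ≤ r := by
    have hdd : (1:ℝ) ≤ (d:ℝ) - 2 := by
      have : (3:ℝ) ≤ (d:ℝ) := by exact_mod_cast hd
      linarith
    have := Real.rpow_le_rpow_of_exponent_ge hrpos hrle1 hdd
    rwa [Real.rpow_one] at this
  calc C * r ^ ((d:ℝ)-2) ≤ C * r := mul_le_mul_of_nonneg_left hr_exp hC0
    _ ≤ C * r₀ := mul_le_mul_of_nonneg_left hrr₀.le hC0
    _ < ε := hCr₀
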